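/- Let k ≥ 2 and let G be a k-uniform hypergraph with n vertices and maximum degree Δ ≥ 1. Set N = 10k²nΔ. Then for every function f : E(K_N^(k)) → E(K_N^(k)) (mapping k-sets of [N] to k-sets of [N]) satisfying f(e) ∩ e = ∅ for every k-set e, there exists an injective map φ : V(G) → [N] such that for every edge e of G, f(φ(e)) ∩ φ(V(G)) = ∅. -/

import Mathlib

open Finset
set_option linter.unusedSectionVars false
set_option maxHeartbeats 1000000
namespace Stmt4Aux


variable {Ω ι : Type*} [Fintype Ω] [DecidableEq Ω] [DecidableEq ι]

/-- intersection of complements of events indexed by `S` -/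
noncomputable def Ev (A : ι → Finset Ω) (S : Finset ι) : Finset Ω :=
  Finset.univ.filter (fun ω => ∀ j ∈ S, ω ∉ A j)

lemma mem_Ev {A : ι → Finset Ω} {S : Finset ι} {ω : Ω} :
    ω ∈ Ev A S ↔ ∀ j ∈ S, ω ∉ A j := by
  classical
  simp [Ev]

lemma Ev_anti {A : ι → Finset Ω} {S S' : Finset ι} (h : S ⊆ S') :
    Ev A S' ⊆ Ev A S := by
  intro ω hω
  rw [mem_Ev] at hω ⊢
  exact fun j hj => hω j (h hj)

lemma Ev_empty (A : ι → Finset Ω) : Ev A (∅ : Finset ι) = Finset.univ := by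
  ext ω; simp [mem_Ev]

lemma Ev_insert {A : ι → Finset Ω} {S : Finset ι} {j : ι} :
    Ev A (insert j S) = Ev A S \ A j := by
  ext ω
  simp only [mem_Ev, Finset.mem_sdiff, Finset.mem_insert]
  constructor
  · intro h; exact ⟨fun i hi => h i (Or.inr hi), h j (Or.inl rfl)⟩
  · rintro ⟨h1, h2⟩ i (rfl | hi)
    · exact h2
    · exact h1 i hi

section LLL

variable (A : ι → Finset Ω) (I : Finset ι) (Γ : ι → Finset ι) (x : ι → ℚ)

/-- Main induction for the Lovász local lemma. -/
lemma LLL_main (hΓ : ∀ i ∈ I, Γ i ⊆ I)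
    (hx0 : ∀ i ∈ I, 0 ≤ x i) (hx1 : ∀ i ∈ I, x i < 1)
    (hyp : ∀ i ∈ I, ∀ S ⊆ I, (∀ j ∈ S, j ∉ Γ i) →
      ((A i ∩ Ev A S).card : ℚ) ≤
        (x i * ∏ j ∈ (Γ i).erase i, (1 - x j)) * (Ev A S).card) :
    ∀ m : ℕ, ∀ S ⊆ I, S.card ≤ m → ∀ i ∈ I,
      ((A i ∩ Ev A S).card : ℚ) ≤ x i * (Ev A S).card := by
  have hprod_le_one : ∀ i ∈ I, ∀ T ⊆ (Γ i).erase i, (∏ j ∈ T, (1 - x j)) ≤ 1 := by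
    intro i hi T hT
    apply Finset.prod_le_one
    · intro j hj
      have hjI : j ∈ I := hΓ i hi (Finset.mem_of_mem_erase (hT hj))
      linarith [hx1 j hjI]
    · intro j hj
      have hjI : j ∈ I := hΓ i hi (Finset.mem_of_mem_erase (hT hj))
      linarith [hx0 j hjI]
  have hprod_nonneg : ∀ i ∈ I, ∀ T ⊆ (Γ i).erase i, 0 ≤ (∏ j ∈ T, (1 - x j)) := by
    intro i hi T hT
    apply Finset.prod_nonneg
    intro j hj
    have hjI : j ∈ I := hΓ i hi (Finset.mem_of_mem_erase (hT hj))
    linarith [hx1 j hjI]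
  intro m
  induction m with
  | zero =>
    intro S hSI hScard i hi
    have hS : S = ∅ := Finset.card_eq_zero.mp (Nat.le_zero.mp hScard)
    subst hS
    calc ((A i ∩ Ev A ∅).card : ℚ) ≤
        (x i * ∏ j ∈ (Γ i).erase i, (1 - x j)) * (Ev A ∅).card :=
          hyp i hi ∅ (Finset.empty_subset _) (by simp)
      _ ≤ (x i * 1) * (Ev A ∅).card := by
          apply mul_le_mul_of_nonneg_right _ (by positivity)
          exact mul_le_mul_of_nonneg_left
            (hprod_le_one i hi _ (Finset.Subset.refl _)) (hx0 i hi)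
      _ = x i * (Ev A ∅).card := by ring
  | succ m ih =>
    intro S hSI hScard i hi
    by_cases hiS : i ∈ S
    · -- A i ∩ Ev A S = ∅
      have : A i ∩ Ev A S = ∅ := by
        apply Finset.eq_empty_of_forall_notMem
        intro ω hω
        rw [Finset.mem_inter, mem_Ev] at hω
        exact hω.2 i hiS hω.1
      rw [this]
      have : (0:ℚ) ≤ x i * (Ev A S).card := by
        apply mul_nonneg (hx0 i hi) (by positivity)
      simpa using this
    · set S₁ : Finset ι := S ∩ Γ i with hS₁def
      set S₂ : Finset ι := S \ Γ i with hS₂def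
      have hS₂I : S₂ ⊆ I := (Finset.sdiff_subset).trans hSI
      have hS₁sub : S₁ ⊆ (Γ i).erase i := by
        intro j hj
        rw [hS₁def, Finset.mem_inter] at hj
        refine Finset.mem_erase.mpr ⟨?_, hj.2⟩
        rintro rfl; exact hiS hj.1
      -- peeling claim
      have peel : ∀ T ⊆ S₁,
          (∏ j ∈ T, (1 - x j)) * ((Ev A S₂).card : ℚ) ≤ ((Ev A (S₂ ∪ T)).card : ℚ) := by
        intro T
        induction T using Finset.induction_on with
        | empty => intro _; simp
        | @insert a T ha ihT =>
          intro hTS₁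
          have haS₁ : a ∈ S₁ := hTS₁ (Finset.mem_insert_self a T)
          have hTS₁' : T ⊆ S₁ := (Finset.subset_insert a T).trans hTS₁
          have haS : a ∈ S := (Finset.inter_subset_left) haS₁
          have haI : a ∈ I := hSI haS
          have haS₂T : a ∉ S₂ ∪ T := by
            rw [Finset.mem_union]
            rintro (h | h)
            · rw [hS₂def, Finset.mem_sdiff] at h
              exact h.2 (Finset.mem_of_mem_inter_right haS₁)
            · exact ha h
          have hsub : S₂ ∪ T ⊆ S.erase a := by
            intro j hj
            rw [Finset.mem_erase]
            constructor
            · rintro rfl; exact haS₂T hj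
            · rcases Finset.mem_union.mp hj with h | h
              · exact Finset.mem_sdiff.mp h |>.1
              · exact Finset.mem_of_mem_inter_left (hTS₁' h)
          have hcard : (S₂ ∪ T).card ≤ m := by
            calc (S₂ ∪ T).card ≤ (S.erase a).card := Finset.card_le_card hsub
              _ = S.card - 1 := Finset.card_erase_of_mem haS
              _ ≤ m := by omega
          have hUI : S₂ ∪ T ⊆ I := hsub.trans ((Finset.erase_subset a S).trans hSI)
          have key := ih (S₂ ∪ T) hUI hcard a haI
          -- Ev A (S₂ ∪ insert a T) = Ev A (S₂ ∪ T) \ A a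
          have hEv : Ev A (S₂ ∪ insert a T) = Ev A (S₂ ∪ T) \ A a := by
            rw [Finset.union_insert, Ev_insert]
          have hcards : ((Ev A (S₂ ∪ insert a T)).card : ℚ)
              = ((Ev A (S₂ ∪ T)).card : ℚ) - ((Ev A (S₂ ∪ T) ∩ A a).card : ℚ) := by
            rw [hEv]
            have := Finset.card_inter_add_card_sdiff (Ev A (S₂ ∪ T)) (A a)
            push_cast [← this]
            ring
          have hxa0 : 0 ≤ x a := hx0 a haI
          have hxa1 : x a < 1 := hx1 a haI
          have hkey' : ((Ev A (S₂ ∪ T) ∩ A a).card : ℚ) ≤ x a * (Ev A (S₂ ∪ T)).card := by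
            rw [Finset.inter_comm]; exact key
          have hstep : (1 - x a) * ((Ev A (S₂ ∪ T)).card : ℚ)
              ≤ ((Ev A (S₂ ∪ insert a T)).card : ℚ) := by
            rw [hcards]; nlinarith
          have hT' := ihT hTS₁'
          calc (∏ j ∈ insert a T, (1 - x j)) * ((Ev A S₂).card : ℚ)
              = (1 - x a) * ((∏ j ∈ T, (1 - x j)) * ((Ev A S₂).card : ℚ)) := by
                rw [Finset.prod_insert ha]; ring
            _ ≤ (1 - x a) * ((Ev A (S₂ ∪ T)).card : ℚ) := by
                apply mul_le_mul_of_nonneg_left hT' (by linarith)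
            _ ≤ ((Ev A (S₂ ∪ insert a T)).card : ℚ) := hstep
      have hSsplit : S₂ ∪ S₁ = S := by
        rw [hS₁def, hS₂def, Finset.sdiff_union_inter]
      have peelS := peel S₁ (Finset.Subset.refl _)
      rw [hSsplit] at peelS
      -- now the main chain
      have hhyp := hyp i hi S₂ hS₂I (by
        intro j hj
        rw [hS₂def, Finset.mem_sdiff] at hj
        exact hj.2)
      have hmono : ((A i ∩ Ev A S).card : ℚ) ≤ ((A i ∩ Ev A S₂).card : ℚ) := by
        have : A i ∩ Ev A S ⊆ A i ∩ Ev A S₂ := by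
          exact Finset.inter_subset_inter (Finset.Subset.refl _)
            (Ev_anti (by rw [hS₂def]; exact Finset.sdiff_subset))
        exact_mod_cast Finset.card_le_card this
      have hprodsplit : (∏ j ∈ (Γ i).erase i, (1 - x j))
          = (∏ j ∈ (Γ i).erase i \ S₁, (1 - x j)) * (∏ j ∈ S₁, (1 - x j)) :=
        (Finset.prod_sdiff hS₁sub).symm
      have h1 : (x i * ∏ j ∈ (Γ i).erase i, (1 - x j)) * ((Ev A S₂).card : ℚ)
          ≤ x i * ((∏ j ∈ S₁, (1 - x j)) * ((Ev A S₂).card : ℚ)) := by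
        rw [hprodsplit]
        have hle1 : (∏ j ∈ (Γ i).erase i \ S₁, (1 - x j)) ≤ 1 :=
          hprod_le_one i hi _ (Finset.sdiff_subset)
        have hge0 : (0:ℚ) ≤ ∏ j ∈ S₁, (1 - x j) := hprod_nonneg i hi S₁ hS₁sub
        have hc : (0:ℚ) ≤ ((Ev A S₂).card : ℚ) := by positivity
        have hge0' : (0:ℚ) ≤ ∏ j ∈ (Γ i).erase i \ S₁, (1 - x j) :=
          hprod_nonneg i hi _ (Finset.sdiff_subset)
        calc (x i * ((∏ j ∈ (Γ i).erase i \ S₁, (1 - x j)) * ∏ j ∈ S₁, (1 - x j)))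
              * ((Ev A S₂).card : ℚ)
            = (∏ j ∈ (Γ i).erase i \ S₁, (1 - x j))
              * (x i * ((∏ j ∈ S₁, (1 - x j)) * ((Ev A S₂).card : ℚ))) := by ring
          _ ≤ 1 * (x i * ((∏ j ∈ S₁, (1 - x j)) * ((Ev A S₂).card : ℚ))) := by
              apply mul_le_mul_of_nonneg_right hle1
              apply mul_nonneg (hx0 i hi) (mul_nonneg hge0 hc)
          _ = x i * ((∏ j ∈ S₁, (1 - x j)) * ((Ev A S₂).card : ℚ)) := by ring
      calc ((A i ∩ Ev A S).card : ℚ) ≤ ((A i ∩ Ev A S₂).card : ℚ) := hmono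
        _ ≤ (x i * ∏ j ∈ (Γ i).erase i, (1 - x j)) * ((Ev A S₂).card : ℚ) := hhyp
        _ ≤ x i * ((∏ j ∈ S₁, (1 - x j)) * ((Ev A S₂).card : ℚ)) := h1
        _ ≤ x i * ((Ev A S).card : ℚ) := mul_le_mul_of_nonneg_left peelS (hx0 i hi)

/-- Conclusion of the local lemma: positive probability that no event occurs. -/
lemma LLL_conclusion (hΓ : ∀ i ∈ I, Γ i ⊆ I)
    (hx0 : ∀ i ∈ I, 0 ≤ x i) (hx1 : ∀ i ∈ I, x i < 1)
    (hyp : ∀ i ∈ I, ∀ S ⊆ I, (∀ j ∈ S, j ∉ Γ i) →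
      ((A i ∩ Ev A S).card : ℚ) ≤
        (x i * ∏ j ∈ (Γ i).erase i, (1 - x j)) * (Ev A S).card)
    (hΩ : 0 < Fintype.card Ω) :
    (Ev A I).Nonempty := by
  have main := LLL_main A I Γ x hΓ hx0 hx1 hyp
  have peel : ∀ T ⊆ I,
      (∏ j ∈ T, (1 - x j)) * ((Fintype.card Ω : ℚ)) ≤ ((Ev A T).card : ℚ) := by
    intro T
    induction T using Finset.induction_on with
    | empty => simp [Ev_empty]
    | @insert a T ha ihT =>
      intro hTI
      have hTI' : T ⊆ I := (Finset.subset_insert a T).trans hTI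
      have haI : a ∈ I := hTI (Finset.mem_insert_self a T)
      have key := main T.card T hTI' le_rfl a haI
      have hEv : Ev A (insert a T) = Ev A T \ A a := Ev_insert
      have hcards : ((Ev A (insert a T)).card : ℚ)
          = ((Ev A T).card : ℚ) - ((Ev A T ∩ A a).card : ℚ) := by
        rw [hEv]
        have := Finset.card_inter_add_card_sdiff (Ev A T) (A a)
        push_cast [← this]
        ring
      have hkey' : ((Ev A T ∩ A a).card : ℚ) ≤ x a * (Ev A T).card := by
        rw [Finset.inter_comm]; exact key
      have hxa1 : x a < 1 := hx1 a haI
      calc (∏ j ∈ insert a T, (1 - x j)) * ((Fintype.card Ω : ℚ))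
          = (1 - x a) * ((∏ j ∈ T, (1 - x j)) * (Fintype.card Ω : ℚ)) := by
            rw [Finset.prod_insert ha]; ring
        _ ≤ (1 - x a) * ((Ev A T).card : ℚ) := by
            apply mul_le_mul_of_nonneg_left (ihT hTI') (by linarith)
        _ ≤ ((Ev A (insert a T)).card : ℚ) := by rw [hcards]; nlinarith
  have hpos : (0:ℚ) < (∏ j ∈ I, (1 - x j)) * ((Fintype.card Ω : ℚ)) := by
    apply mul_pos
    · apply Finset.prod_pos
      intro j hj
      linarith [hx1 j hj]
    · exact_mod_cast hΩ
  have := lt_of_lt_of_le hpos (peel I (Finset.Subset.refl _))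
  rw [Finset.nonempty_iff_ne_empty]
  intro hempty
  rw [hempty] at this
  simp at this

end LLL





variable {V : Type*} [Fintype V] [DecidableEq V] {N : ℕ}

/-- `A` is determined by the coordinates in `T`. -/
def Det (T : Finset V) (A : Finset (V → Fin N)) : Prop :=
  ∀ ω ω' : V → Fin N, (∀ v ∈ T, ω v = ω' v) → (ω ∈ A ↔ ω' ∈ A)

lemma card_inter_mul_card {T U : Finset V} (h : Disjoint T U)
    {A B : Finset (V → Fin N)} (hA : Det T A) (hB : Det U B) :
    (A ∩ B).card * Fintype.card (V → Fin N) = A.card * B.card := by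
  classical
  have key : ((A ∩ B) ×ˢ (Finset.univ : Finset (V → Fin N))).card = (A ×ˢ B).card := by
    refine Finset.card_bij'
      (i := fun p _ => ((fun v => if v ∈ T then p.1 v else p.2 v),
                        (fun v => if v ∈ T then p.2 v else p.1 v)))
      (j := fun p _ => ((fun v => if v ∈ T then p.1 v else p.2 v),
                        (fun v => if v ∈ T then p.2 v else p.1 v)))
      ?hi ?hj ?left ?right
    case hi =>
      rintro ⟨ψ, χ⟩ hp
      rw [Finset.mem_product] at hp ⊢
      obtain ⟨hψ, -⟩ := hp
      rw [Finset.mem_inter] at hψ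
      constructor
      · exact (hA ψ (fun v => if v ∈ T then ψ v else χ v)
          (fun v hv => by simp [hv])).mp hψ.1
      · exact (hB ψ (fun v => if v ∈ T then χ v else ψ v)
          (fun v hv => by
            have hvT : v ∉ T := fun hvT => (Finset.disjoint_left.mp h) hvT hv
            simp [hvT])).mp hψ.2
    case hj =>
      rintro ⟨ω, ω'⟩ hp
      rw [Finset.mem_product] at hp ⊢
      obtain ⟨hω, hω'⟩ := hp
      refine ⟨Finset.mem_inter.mpr ⟨?_, ?_⟩, Finset.mem_univ _⟩
      · exact (hA ω (fun v => if v ∈ T then ω v else ω' v)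
          (fun v hv => by simp [hv])).mp hω
      · exact (hB ω' (fun v => if v ∈ T then ω v else ω' v)
          (fun v hv => by
            have hvT : v ∉ T := fun hvT => (Finset.disjoint_left.mp h) hvT hv
            simp [hvT])).mp hω'
    case left =>
      rintro ⟨ψ, χ⟩ hp
      refine Prod.ext ?_ ?_ <;> · ext v; by_cases hv : v ∈ T <;> simp [hv]
    case right =>
      rintro ⟨ω, ω'⟩ hp
      refine Prod.ext ?_ ?_ <;> · ext v; by_cases hv : v ∈ T <;> simp [hv]
  rw [Finset.card_product, Finset.card_product, Finset.card_univ] at key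
  linarith [key]






variable {V : Type*} [Fintype V] [DecidableEq V] {N k : ℕ}

lemma card_restrict_univ (v : V) :
    Fintype.card ({w : V // w ≠ v} → Fin N) = N ^ (Fintype.card V - 1) := by
  rw [Fintype.card_fun, Fintype.card_fin]
  congr 1
  simp [Fintype.card_subtype_compl]

lemma card_collision (u v : V) (huv : u ≠ v) :
    (Finset.univ.filter fun ω : V → Fin N => ω u = ω v).card
      ≤ N ^ (Fintype.card V - 1) := by
  classical
  have := Finset.card_le_card_of_injOn
    (f := fun (ω : V → Fin N) => fun w : {w : V // w ≠ v} => ω w.1)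
    (s := Finset.univ.filter fun ω : V → Fin N => ω u = ω v)
    (t := Finset.univ)
    (fun a _ => Finset.mem_univ _) ?_
  · simpa [card_restrict_univ (N := N) v] using this
  · intro ω hω ω' hω' hfeq
    simp only [Finset.coe_filter, Set.mem_setOf_eq, Finset.mem_univ, true_and] at hω hω'
    funext w
    by_cases hw : w = v
    · subst hw
      have h1 : ω u = ω' u := congrFun hfeq ⟨u, huv⟩
      rw [← hω, ← hω', h1]
    · exact congrFun hfeq ⟨w, hw⟩

lemma card_B (e : Finset V) (w : V)
    (f : Finset (Fin N) → Finset (Fin N))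
    (hf : ∀ s : Finset (Fin N), s.card = k → (f s).card = k ∧ Disjoint (f s) s) :
    (Finset.univ.filter fun ω : V → Fin N =>
        (e.image ω).card = k ∧ ω w ∈ f (e.image ω)).card
      ≤ k * N ^ (Fintype.card V - 1) := by
  classical
  by_cases hwe : w ∈ e
  · have : (Finset.univ.filter fun ω : V → Fin N =>
        (e.image ω).card = k ∧ ω w ∈ f (e.image ω)) = ∅ := by
      apply Finset.filter_eq_empty_iff.mpr
      rintro ω - ⟨hcard, hmem⟩
      have h1 : ω w ∈ e.image ω := Finset.mem_image_of_mem ω hwe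
      exact (Finset.disjoint_left.mp (hf _ hcard).2) hmem h1
    simp [this]
  · set s := Finset.univ.filter fun ω : V → Fin N =>
      (e.image ω).card = k ∧ ω w ∈ f (e.image ω) with hs
    have himg : ∀ ω ∈ s, ∀ ω' ∈ s,
        (fun x : {x : V // x ≠ w} => ω x.1) = (fun x : {x : V // x ≠ w} => ω' x.1) →
        e.image ω = e.image ω' := by
      intro ω hω ω' hω' heq
      apply Finset.image_congr
      intro x hx
      have hxw : x ≠ w := fun h => hwe (h ▸ hx)
      exact congrFun heq ⟨x, hxw⟩
    have key := Finset.card_le_mul_card_image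
      (f := fun (ω : V → Fin N) => fun x : {x : V // x ≠ w} => ω x.1) s k ?_
    · refine key.trans ?_
      have : ((s.image fun (ω : V → Fin N) => fun x : {x : V // x ≠ w} => ω x.1)).card
          ≤ N ^ (Fintype.card V - 1) := by
        have := Finset.card_le_card (Finset.subset_univ
          ((s.image fun (ω : V → Fin N) => fun x : {x : V // x ≠ w} => ω x.1)))
        simpa [card_restrict_univ (N := N) w] using this
      exact Nat.mul_le_mul_left k this
    · -- each fiber has at most k elements
      intro b hb
      obtain ⟨ω₀, hω₀s, hω₀b⟩ := Finset.mem_image.mp hb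
      have hω₀ : (e.image ω₀).card = k ∧ ω₀ w ∈ f (e.image ω₀) := by
        rw [hs] at hω₀s
        exact (Finset.mem_filter.mp hω₀s).2
      have hle : (s.filter fun a : V → Fin N =>
          (fun x : {x : V // x ≠ w} => a x.1) = b).card ≤ (f (e.image ω₀)).card := by
        apply Finset.card_le_card_of_injOn (f := fun ω : V → Fin N => ω w)
        · intro ω hω
          rw [Finset.mem_coe, Finset.mem_filter] at hω
          obtain ⟨hωs, hωb⟩ := hω
          have himgeq : e.image ω = e.image ω₀ :=
            himg ω hωs ω₀ hω₀s (by rw [hωb, hω₀b])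
          have h2 := (Finset.mem_filter.mp hωs).2.2
          rwa [himgeq] at h2
        · intro ω hω ω' hω' hww
          simp only [Finset.coe_filter, Set.mem_setOf_eq] at hω hω'
          funext x
          by_cases hx : x = w
          · subst hx; exact hww
          · exact congrFun (hω.2.trans hω'.2.symm) ⟨x, hx⟩
      exact hle.trans_eq (hf _ hω₀.1).1






variable {V : Type*} [Fintype V] [DecidableEq V] {N : ℕ}

abbrev Idx (V : Type*) := Finset V ⊕ (Finset V × V)

def vbl : Idx V → Finset V := Sum.elim id (fun q => insert q.2 q.1)

variable (k : ℕ) (N : ℕ) (E : Finset (Finset V)) (f : Finset (Fin N) → Finset (Fin N))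

def EvA : Idx V → Finset (V → Fin N) :=
  Sum.elim
    (fun p => Finset.univ.filter fun ω => ∃ u ∈ p, ∃ v ∈ p, u ≠ v ∧ ω u = ω v)
    (fun q => Finset.univ.filter fun ω =>
      (q.1.image ω).card = k ∧ ω q.2 ∈ f (q.1.image ω))

def IdxSet : Finset (Idx V) :=
  ((Finset.univ.filter fun p : Finset V => p.card = 2).image Sum.inl)
    ∪ ((E ×ˢ Finset.univ).image Sum.inr)

def Gam (i : Idx V) : Finset (Idx V) :=
  (IdxSet E).filter fun j => ¬ Disjoint (vbl i) (vbl j)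

lemma mem_IdxSet {i : Idx V} :
    i ∈ IdxSet E ↔ (∃ p : Finset V, p.card = 2 ∧ i = Sum.inl p)
      ∨ (∃ e w, e ∈ E ∧ i = Sum.inr (e, w)) := by
  simp only [IdxSet, Finset.mem_union, Finset.mem_image, Finset.mem_filter,
    Finset.mem_univ, true_and, Finset.mem_product]
  constructor
  · rintro (⟨p, hp, rfl⟩ | ⟨⟨e, w⟩, ⟨he, -⟩, rfl⟩)
    · exact Or.inl ⟨p, hp, rfl⟩
    · exact Or.inr ⟨e, w, he, rfl⟩
  · rintro (⟨p, hp, rfl⟩ | ⟨e, w, he, rfl⟩)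
    · exact Or.inl ⟨p, hp, rfl⟩
    · exact Or.inr ⟨(e, w), ⟨he, trivial⟩, rfl⟩

lemma det_EvA (i : Idx V) : Det (vbl i) (EvA k N f i) := by
  rcases i with p | ⟨e, w⟩
  · intro ω ω' hagree
    simp only [EvA, Sum.elim_inl, Finset.mem_filter, Finset.mem_univ, true_and]
    have hag : ∀ v ∈ p, ω v = ω' v := by
      intro v hv; exact hagree v (by simpa [vbl] using hv)
    constructor
    · rintro ⟨u, hu, v, hv, huv, hcol⟩
      exact ⟨u, hu, v, hv, huv, by rw [← hag u hu, ← hag v hv, hcol]⟩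
    · rintro ⟨u, hu, v, hv, huv, hcol⟩
      exact ⟨u, hu, v, hv, huv, by rw [hag u hu, hag v hv, hcol]⟩
  · intro ω ω' hagree
    have hag : ∀ v ∈ e, ω v = ω' v := by
      intro v hv
      exact hagree v (by simp [vbl, hv])
    have hw : ω w = ω' w := hagree w (by simp [vbl])
    have himg : e.image ω = e.image ω' := Finset.image_congr (fun v hv => hag v hv)
    simp only [EvA, Sum.elim_inr, Finset.mem_filter, Finset.mem_univ, true_and]
    rw [himg, hw]






variable {V : Type*} [Fintype V] [DecidableEq V]

lemma card_two_sets (v : V) :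
    (Finset.univ.filter fun p : Finset V => p.card = 2 ∧ v ∈ p).card
      ≤ Fintype.card V := by
  classical
  have h1 : (Finset.univ.filter fun p : Finset V => p.card = 2 ∧ v ∈ p).card
      ≤ ((Finset.univ : Finset V).image fun w => ({w} : Finset V)).card := by
    apply Finset.card_le_card_of_injOn (f := fun p => p.erase v)
    · intro p hp
      rw [Finset.mem_coe, Finset.mem_filter] at hp
      obtain ⟨-, hp2, hvp⟩ := hp
      have : (p.erase v).card = 1 := by
        rw [Finset.card_erase_of_mem hvp, hp2]
      obtain ⟨w, hw⟩ := Finset.card_eq_one.mp this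
      exact Finset.mem_image.mpr ⟨w, Finset.mem_univ _, hw.symm⟩
    · intro p hp p' hp' heq
      simp only [Finset.coe_filter, Set.mem_setOf_eq, Finset.mem_univ, true_and] at hp hp'
      simp only at heq
      rw [← Finset.insert_erase hp.2, ← Finset.insert_erase hp'.2, heq]
  exact h1.trans ((Finset.card_image_le).trans (by simp))

lemma prod_split (G : Finset (Finset V ⊕ (Finset V × V))) (a b : ℚ) :
    (∏ j ∈ G, (1 - Sum.elim (fun _ => a) (fun _ => b) j))
      = (1 - a) ^ (G.filter (fun j => j.isLeft = true)).card
        * (1 - b) ^ (G.filter (fun j => ¬ (j.isLeft = true))).card := by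
  classical
  rw [← Finset.prod_filter_mul_prod_filter_not G (fun j => j.isLeft = true)]
  congr 1
  · rw [← Finset.prod_const]
    apply Finset.prod_congr rfl
    intro j hj
    rw [Finset.mem_filter] at hj
    rcases j with p | q
    · simp
    · simp at hj
  · rw [← Finset.prod_const]
    apply Finset.prod_congr rfl
    intro j hj
    rw [Finset.mem_filter] at hj
    rcases j with p | q
    · simp at hj
    · simp


variable (E : Finset (Finset V))

lemma card_Gam_left (i : Idx V) :
    ((Gam E i).filter (fun j => j.isLeft = true)).card
      ≤ (vbl i).card * Fintype.card V := by
  classical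
  have hsub : (Gam E i).filter (fun j => j.isLeft = true) ⊆
      (vbl i).biUnion (fun v =>
        (Finset.univ.filter fun p : Finset V => p.card = 2 ∧ v ∈ p).image Sum.inl) := by
    intro j hj
    rw [Finset.mem_filter] at hj
    obtain ⟨hjG, hjL⟩ := hj
    rw [Gam, Finset.mem_filter] at hjG
    obtain ⟨hjI, hnd⟩ := hjG
    rcases j with p | q
    · rcases (mem_IdxSet E).mp hjI with ⟨p', hp', heq⟩ | ⟨e, w, he, heq⟩
      · have hpp : p' = p := Sum.inl.inj heq.symm
        subst hpp
        obtain ⟨v, hvT, hvp⟩ := Finset.not_disjoint_iff.mp hnd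
        rw [Finset.mem_biUnion]
        refine ⟨v, hvT, Finset.mem_image.mpr ⟨p', ?_, rfl⟩⟩
        rw [Finset.mem_filter]
        exact ⟨Finset.mem_univ _, hp', by simpa [vbl] using hvp⟩
      · exact absurd heq (by simp)
    · simp at hjL
  calc ((Gam E i).filter (fun j => j.isLeft = true)).card
      ≤ ((vbl i).biUnion (fun v =>
        (Finset.univ.filter fun p : Finset V => p.card = 2 ∧ v ∈ p).image Sum.inl)).card :=
        Finset.card_le_card hsub
    _ ≤ ∑ v ∈ vbl i, ((Finset.univ.filter
          fun p : Finset V => p.card = 2 ∧ v ∈ p).image Sum.inl).card :=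
        Finset.card_biUnion_le
    _ ≤ ∑ v ∈ vbl i, Fintype.card V := by
        apply Finset.sum_le_sum
        intro v hv
        exact (Finset.card_image_le).trans (card_two_sets v)
    _ = (vbl i).card * Fintype.card V := by
        rw [Finset.sum_const, smul_eq_mul]

lemma card_Gam_right (Δ : ℕ)
    (hdeg : ∀ v : V, (E.filter (fun e => v ∈ e)).card ≤ Δ) (i : Idx V) :
    ((Gam E i).filter (fun j => ¬ (j.isLeft = true))).card
      ≤ (vbl i).card * (Δ * Fintype.card V + E.card) := by
  classical
  have hsub : (Gam E i).filter (fun j => ¬ (j.isLeft = true)) ⊆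
      (vbl i).biUnion (fun v =>
        (((E.filter fun e => v ∈ e) ×ˢ Finset.univ) ∪ (E ×ˢ {v})).image Sum.inr) := by
    intro j hj
    rw [Finset.mem_filter] at hj
    obtain ⟨hjG, hjL⟩ := hj
    rw [Gam, Finset.mem_filter] at hjG
    obtain ⟨hjI, hnd⟩ := hjG
    rcases j with p | ⟨e, w⟩
    · simp at hjL
    · rcases (mem_IdxSet E).mp hjI with ⟨p', hp', heq⟩ | ⟨e', w', he', heq⟩
      · exact absurd heq (by simp)
      · have : e' = e ∧ w' = w := by
          have := Sum.inr.inj heq.symm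
          exact ⟨congrArg Prod.fst this, congrArg Prod.snd this⟩
        obtain ⟨rfl, rfl⟩ := this
        obtain ⟨v, hvT, hvq⟩ := Finset.not_disjoint_iff.mp hnd
        rw [Finset.mem_biUnion]
        refine ⟨v, hvT, Finset.mem_image.mpr ⟨(e', w'), ?_, rfl⟩⟩
        rw [Finset.mem_union]
        have hvq' : v = w' ∨ v ∈ e' := by simpa [vbl] using hvq
        rcases hvq' with rfl | hve
        · right
          rw [Finset.mem_product]
          exact ⟨he', Finset.mem_singleton_self _⟩
        · left
          rw [Finset.mem_product]
          exact ⟨Finset.mem_filter.mpr ⟨he', hve⟩, Finset.mem_univ _⟩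
  calc ((Gam E i).filter (fun j => ¬ (j.isLeft = true))).card
      ≤ _ := Finset.card_le_card hsub
    _ ≤ ∑ v ∈ vbl i, ((((E.filter fun e => v ∈ e) ×ˢ Finset.univ)
          ∪ (E ×ˢ ({v} : Finset V))).image Sum.inr).card := Finset.card_biUnion_le
    _ ≤ ∑ v ∈ vbl i, (Δ * Fintype.card V + E.card) := by
        apply Finset.sum_le_sum
        intro v hv
        calc ((((E.filter fun e => v ∈ e) ×ˢ Finset.univ)
              ∪ (E ×ˢ ({v} : Finset V))).image Sum.inr).card
            ≤ (((E.filter fun e => v ∈ e) ×ˢ Finset.univ)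
              ∪ (E ×ˢ ({v} : Finset V))).card := Finset.card_image_le
          _ ≤ ((E.filter fun e => v ∈ e) ×ˢ (Finset.univ : Finset V)).card
              + (E ×ˢ ({v} : Finset V)).card := Finset.card_union_le _ _
          _ ≤ Δ * Fintype.card V + E.card := by
              rw [Finset.card_product, Finset.card_product]
              gcongr
              · exact hdeg v
              · simp
              · simp
    _ = (vbl i).card * (Δ * Fintype.card V + E.card) := by
        rw [Finset.sum_const, smul_eq_mul]


lemma numeric1 (k n Δ g1 g2 EE : ℕ) (hk : 2 ≤ k) (hn : 2 ≤ n) (hΔ : 1 ≤ Δ)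
    (hg1 : g1 ≤ 2 * n) (hg2 : g2 ≤ 2 * (n * Δ + EE)) (hE : k * EE ≤ n * Δ) :
    (1 : ℚ) ≤ ((10 * k^2 * n * Δ : ℕ) : ℚ) * (9 / (100 * k * n)) *
      ((1 - 9 / (100 * k * n)) ^ g1 * (1 - 3 / (7 * (k+1) * n * Δ)) ^ g2) := by
  have hkq : (2:ℚ) ≤ (k:ℚ) := by exact_mod_cast hk
  have hnq : (2:ℚ) ≤ (n:ℚ) := by exact_mod_cast hn
  have hΔq : (1:ℚ) ≤ (Δ:ℚ) := by exact_mod_cast hΔ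
  have hkpos : (0:ℚ) < k := by linarith
  have hnpos : (0:ℚ) < n := by linarith
  have hΔpos : (0:ℚ) < Δ := by linarith
  set α : ℚ := 9 / (100 * k * n) with hα
  set β : ℚ := 3 / (7 * (k+1) * n * Δ) with hβ
  have hαpos : 0 < α := by positivity
  have hβpos : 0 < β := by positivity
  have hnα : (n:ℚ) * α = 9 / (100 * k) := by
    rw [hα]; field_simp
  have hnα_le : (n:ℚ) * α ≤ 9 / 200 := by
    rw [hnα]
    rw [div_le_div_iff₀ (by linarith) (by norm_num)]
    linarith
  have hα_le : α ≤ 9 / 200 := by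
    calc α ≤ (n:ℚ) * α := le_mul_of_one_le_left hαpos.le (by linarith)
      _ ≤ 9/200 := hnα_le
  have hnΔβ : (n:ℚ) * Δ * β = 3 / (7 * (k+1)) := by
    rw [hβ]; field_simp
  have hnΔβ_le : (n:ℚ) * Δ * β ≤ 1 / 7 := by
    rw [hnΔβ, div_le_div_iff₀ (by positivity) (by norm_num)]
    linarith
  have hβ_le : β ≤ 1 / 7 := by
    calc β ≤ (n:ℚ) * Δ * β := by
          apply le_mul_of_one_le_left hβpos.le
          nlinarith
      _ ≤ 1/7 := hnΔβ_le
  -- Bernoulli bounds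
  have bern : ∀ (x : ℚ) (m : ℕ), 0 ≤ x → x ≤ 1 → 1 - (m:ℚ) * x ≤ (1 - x) ^ m := by
    intro x m hx0 hx1
    have := one_add_mul_le_pow (a := -x) (by linarith) m
    simpa [sub_eq_add_neg, mul_neg] using this
  -- bound for g1 part
  have h1a : (1 - α) ^ g1 ≥ (1 - α) ^ (2 * n) :=
    pow_le_pow_of_le_one (by linarith) (by linarith) hg1
  have h1b : (1 - α) ^ (2 * n) = ((1 - α) ^ n) ^ 2 := by
    rw [← pow_mul, mul_comm]
  have h1c : (191/200 : ℚ) ≤ (1 - α) ^ n := by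
    have := bern α n hαpos.le (by linarith)
    linarith
  have h1 : ((191:ℚ)/200) ^ 2 ≤ (1 - α) ^ g1 := by
    rw [h1b] at h1a
    refine le_trans ?_ h1a
    apply pow_le_pow_left₀ (by norm_num) h1c
  -- bound for g2 part
  have hg2' : g2 ≤ 3 * (n * Δ) := by
    have h2EE : 2 * EE ≤ n * Δ := by
      calc 2 * EE ≤ k * EE := Nat.mul_le_mul_right EE hk
        _ ≤ n * Δ := hE
    omega
  have h2a : (1 - β) ^ g2 ≥ (1 - β) ^ (3 * (n * Δ)) :=
    pow_le_pow_of_le_one (by linarith) (by linarith) hg2'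
  have h2b : (1 - β) ^ (3 * (n * Δ)) = ((1 - β) ^ (n * Δ)) ^ 3 := by
    rw [← pow_mul, mul_comm]
  have h2c : (6/7 : ℚ) ≤ (1 - β) ^ (n * Δ) := by
    have := bern β (n * Δ) hβpos.le (by linarith)
    have hcast : ((n * Δ : ℕ) : ℚ) * β = (n:ℚ) * Δ * β := by push_cast; ring
    rw [hcast] at this
    linarith
  have h2 : ((6:ℚ)/7) ^ 3 ≤ (1 - β) ^ g2 := by
    rw [h2b] at h2a
    refine le_trans ?_ h2a
    apply pow_le_pow_left₀ (by norm_num) h2c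
  -- N * α bound
  have hNα : ((10 * k^2 * n * Δ : ℕ) : ℚ) * α = (9/10) * k * Δ := by
    rw [hα]; push_cast; field_simp; ring
  have hNα_ge : (9/5 : ℚ) ≤ ((10 * k^2 * n * Δ : ℕ) : ℚ) * α := by
    rw [hNα]; nlinarith
  calc (1:ℚ) ≤ (9/5) * ((191/200)^2 * (6/7)^3) := by norm_num
    _ ≤ (((10 * k^2 * n * Δ : ℕ) : ℚ) * α) * ((1 - α) ^ g1 * (1 - β) ^ g2) := by
        have p1 : (0:ℚ) ≤ (191/200:ℚ)^2 := by positivity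
        have p2 : (0:ℚ) ≤ (6/7:ℚ)^3 := by positivity
        gcongr


lemma numeric2 (k n Δ g1 g2 EE : ℕ) (hk : 2 ≤ k) (hkn : k ≤ n) (hΔ : 1 ≤ Δ)
    (hg1 : g1 ≤ (k+1) * n) (hg2 : g2 ≤ (k+1) * (n * Δ + EE)) (hE : k * EE ≤ n * Δ) :
    (k : ℚ) ≤ ((10 * k^2 * n * Δ : ℕ) : ℚ) * (3 / (7 * (k+1) * n * Δ)) *
      ((1 - 9 / (100 * k * n)) ^ g1 * (1 - 3 / (7 * (k+1) * n * Δ)) ^ g2) := by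
  have hn : 2 ≤ n := le_trans hk hkn
  have hkq : (2:ℚ) ≤ (k:ℚ) := by exact_mod_cast hk
  have hnq : (2:ℚ) ≤ (n:ℚ) := by exact_mod_cast hn
  have hΔq : (1:ℚ) ≤ (Δ:ℚ) := by exact_mod_cast hΔ
  have hkpos : (0:ℚ) < k := by linarith
  have hnpos : (0:ℚ) < n := by linarith
  have hΔpos : (0:ℚ) < Δ := by linarith
  set α : ℚ := 9 / (100 * k * n) with hα
  set β : ℚ := 3 / (7 * (k+1) * n * Δ) with hβ
  have hαpos : 0 < α := by positivity
  have hβpos : 0 < β := by positivity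
  have hα_le : α ≤ 9 / 200 := by
    rw [hα, div_le_div_iff₀ (by positivity) (by norm_num)]
    nlinarith
  have hx6 : (6:ℚ) ≤ ((k:ℚ)+1) * (n:ℚ) * (Δ:ℚ) := by
    have h6 : (6:ℚ) ≤ ((k:ℚ)+1) * n := by nlinarith
    calc (6:ℚ) ≤ ((k:ℚ)+1) * n := h6
      _ ≤ ((k:ℚ)+1) * n * Δ := le_mul_of_one_le_right (by positivity) hΔq
  have hβval : β = 3 / (7 * (((k:ℚ)+1) * n * Δ)) := by rw [hβ]; ring_nf
  have hβ_le : β ≤ 1 / 14 := by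
    rw [hβval, div_le_div_iff₀ (by positivity) (by norm_num)]
    linarith
  have bern : ∀ (x : ℚ) (m : ℕ), 0 ≤ x → x ≤ 1 → 1 - (m:ℚ) * x ≤ (1 - x) ^ m := by
    intro x m hx0 hx1
    have := one_add_mul_le_pow (a := -x) (by linarith) m
    simpa [sub_eq_add_neg, mul_neg] using this
  -- g1 part
  have h1a : (1 - α) ^ g1 ≥ (1 - α) ^ ((k+1) * n) :=
    pow_le_pow_of_le_one (by linarith) (by linarith) hg1
  have hk1nα : (((k+1) * n : ℕ) : ℚ) * α = 9 * ((k:ℚ)+1) / (100 * k) := by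
    rw [hα]; push_cast; field_simp
  have hk1nα_le : (((k+1) * n : ℕ) : ℚ) * α ≤ 27 / 200 := by
    rw [hk1nα, div_le_div_iff₀ (by positivity) (by norm_num)]
    nlinarith
  have h1 : (173/200 : ℚ) ≤ (1 - α) ^ g1 := by
    have hb := bern α ((k+1) * n) hαpos.le (by linarith)
    have : (173/200 : ℚ) ≤ (1 - α) ^ ((k+1) * n) := by linarith
    linarith [h1a]
  -- g2 part
  set q : ℕ := ((k+1) * n * Δ + 1) / 2 with hq
  have hq2 : (k+1) * n * Δ ≤ 2 * q ∧ 2 * q ≤ (k+1) * n * Δ + 1 := by omega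
  have hEEq : (k+1) * EE ≤ q := by
    have h1' : 2 * ((k+1) * EE) ≤ (k+1) * (k * EE) := by
      have h2EE : 2 * EE ≤ k * EE := Nat.mul_le_mul_right EE hk
      calc 2 * ((k+1) * EE) = (k+1) * (2 * EE) := by ring
        _ ≤ (k+1) * (k * EE) := Nat.mul_le_mul_left _ h2EE
    have h2' : (k+1) * (k * EE) ≤ (k+1) * (n * Δ) := Nat.mul_le_mul_left _ hE
    have h3' : (k+1) * (n * Δ) = (k+1) * n * Δ := by ring
    omega
  have hg2' : g2 ≤ 3 * q := by
    have hdist : (k+1) * (n * Δ + EE) = (k+1) * n * Δ + (k+1) * EE := by ring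
    omega
  have h2a : (1 - β) ^ g2 ≥ (1 - β) ^ (3 * q) :=
    pow_le_pow_of_le_one (by linarith) (by linarith) hg2'
  have h2b : (1 - β) ^ (3 * q) = ((1 - β) ^ q) ^ 3 := by
    rw [← pow_mul, mul_comm]
  have hqβ : (q:ℚ) * β ≤ 1/4 := by
    have hq_le : (q:ℚ) ≤ (((k:ℚ)+1) * n * Δ + 1) / 2 := by
      have h2q := hq2.2
      have hcast : ((2 * q : ℕ) : ℚ) ≤ (((k+1) * n * Δ + 1 : ℕ) : ℚ) := by exact_mod_cast h2q
      push_cast at hcast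
      linarith
    set x : ℚ := ((k:ℚ)+1) * n * Δ with hxdef
    have hxpos : (0:ℚ) < x := by positivity
    calc (q:ℚ) * β ≤ ((x + 1) / 2) * (3 / (7 * x)) := by
          apply mul_le_mul hq_le (le_of_eq hβval) hβpos.le (by positivity)
      _ ≤ 1/4 := by
          rw [div_mul_div_comm, div_le_div_iff₀ (by positivity) (by norm_num)]
          nlinarith
  have h2 : ((3:ℚ)/4) ^ 3 ≤ (1 - β) ^ g2 := by
    have hb := bern β q hβpos.le (by linarith)
    have h34 : (3/4 : ℚ) ≤ (1 - β) ^ q := by linarith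
    have : ((3:ℚ)/4) ^ 3 ≤ ((1 - β) ^ q) ^ 3 := pow_le_pow_left₀ (by norm_num) h34 3
    rw [← h2b] at this
    linarith [h2a]
  -- N * β value
  have hNβ : ((10 * k^2 * n * Δ : ℕ) : ℚ) * β = 30 * k^2 / (7 * ((k:ℚ)+1)) := by
    rw [hβ]; push_cast; field_simp; ring
  have hNβ_ge : (20/7 : ℚ) * k ≤ ((10 * k^2 * n * Δ : ℕ) : ℚ) * β := by
    rw [hNβ, le_div_iff₀ (by positivity)]
    nlinarith
  have hfinal : (k:ℚ) ≤ (20/7 * k) * ((173/200) * (3/4)^3) := by nlinarith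
  calc (k:ℚ) ≤ (20/7 * k) * ((173/200) * (3/4)^3) := hfinal
    _ ≤ (((10 * k^2 * n * Δ : ℕ) : ℚ) * β) * ((1 - α) ^ g1 * (1 - β) ^ g2) := by
        gcongr
    _ = ((10 * k^2 * n * Δ : ℕ) : ℚ) * β * ((1 - α) ^ g1 * (1 - β) ^ g2) := by ring


variable {V : Type*} [Fintype V] [DecidableEq V]

lemma sum_deg (E : Finset (Finset V)) (k Δ : ℕ) (hunif : ∀ e ∈ E, e.card = k)
    (hdeg : ∀ v : V, (E.filter (fun e => v ∈ e)).card ≤ Δ) :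
    k * E.card ≤ Fintype.card V * Δ := by
  classical
  have key : ∑ e ∈ E, e.card = ∑ v : V, (E.filter (fun e => v ∈ e)).card := by
    have h1 : ∀ e : Finset V, e.card = ∑ v : V, if v ∈ e then 1 else 0 := by
      intro e
      rw [← Finset.card_filter, Finset.filter_univ_mem]
    calc ∑ e ∈ E, e.card = ∑ e ∈ E, ∑ v : V, if v ∈ e then 1 else 0 :=
          Finset.sum_congr rfl (fun e _ => h1 e)
      _ = ∑ v : V, ∑ e ∈ E, if v ∈ e then 1 else 0 := Finset.sum_comm
      _ = ∑ v : V, (E.filter (fun e => v ∈ e)).card :=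
          Finset.sum_congr rfl (fun v _ => (Finset.card_filter _ _).symm)
  have lhs : ∑ e ∈ E, e.card = k * E.card := by
    rw [Finset.sum_congr rfl (fun e he => hunif e he), Finset.sum_const, smul_eq_mul,
      mul_comm]
  have rhs : ∑ v : V, (E.filter (fun e => v ∈ e)).card ≤ Fintype.card V * Δ := by
    calc ∑ v : V, (E.filter (fun e => v ∈ e)).card ≤ ∑ _v : V, Δ :=
          Finset.sum_le_sum (fun v _ => hdeg v)
      _ = Fintype.card V * Δ := by rw [Finset.sum_const, smul_eq_mul, Finset.card_univ]
  omega

end Stmt4Aux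

open Stmt4Aux in
/-- Let `G` be a `k`-uniform hypergraph (`k ≥ 2`) with `n` vertices
and maximum degree `Δ ≥ 1`, and set `N = 10k²nΔ`. For every `f` mapping `k`-sets
of `[N]` to `k`-sets of `[N]` with `f(e) ∩ e = ∅`, there is an injective
`φ : V(G) → [N]` such that `f(φ(e))` avoids `φ(V(G))` for every edge `e`. -/
theorem stmt4 {V : Type*} [Fintype V] [DecidableEq V]
    (k n Δ N : ℕ) (hk : 2 ≤ k) (hΔ : 1 ≤ Δ) (hn : n = Fintype.card V)
    (E : Finset (Finset V)) (hunif : ∀ e ∈ E, e.card = k)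
    (hdeg : Δ = Finset.univ.sup (fun v : V => (E.filter (fun e => v ∈ e)).card))
    (hN : N = 10 * k ^ 2 * n * Δ)
    (f : Finset (Fin N) → Finset (Fin N))
    (hf : ∀ e : Finset (Fin N), e.card = k → (f e).card = k ∧ Disjoint (f e) e) :
    ∃ φ : V → Fin N, Function.Injective φ ∧
      ∀ e ∈ E, Disjoint (f (e.image φ)) (Finset.univ.image φ) := by
  classical
  rcases E.eq_empty_or_nonempty with rfl | hEne
  · -- no edges : any injection works
    have hcard : Fintype.card V ≤ Fintype.card (Fin N) := by
      rw [Fintype.card_fin, hN, ← hn]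
      have h10 : 1 ≤ 10 * k^2 := by nlinarith
      calc n = 1 * n * 1 := by ring
        _ ≤ 10 * k ^ 2 * n * Δ := Nat.mul_le_mul (Nat.mul_le_mul h10 le_rfl) hΔ
    obtain ⟨emb⟩ := Function.Embedding.nonempty_iff_card_le.mpr hcard
    exact ⟨emb, emb.injective, by simp⟩
  obtain ⟨e₀, he₀⟩ := hEne
  have hkn : k ≤ n := by
    rw [hn, ← hunif e₀ he₀]
    exact Finset.card_le_univ e₀
  have hn2 : 2 ≤ n := le_trans hk hkn
  have hdeg' : ∀ v : V, (E.filter (fun e => v ∈ e)).card ≤ Δ := by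
    intro v
    rw [hdeg]
    exact Finset.le_sup (f := fun v : V => (E.filter (fun e => v ∈ e)).card)
      (Finset.mem_univ v)
  have hEcard : k * E.card ≤ n * Δ := by
    rw [hn]; exact sum_deg E k Δ hunif hdeg'
  have hNpos : 0 < N := by
    rw [hN]
    have hkpos : 0 < k := by omega
    exact Nat.mul_pos (Nat.mul_pos (Nat.mul_pos (by omega) (pow_pos hkpos 2)) (by omega))
      (by omega)
  -- rational parameters
  have hkq : (2:ℚ) ≤ (k:ℚ) := by exact_mod_cast hk
  have hnq : (2:ℚ) ≤ (n:ℚ) := by exact_mod_cast hn2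
  have hΔq : (1:ℚ) ≤ (Δ:ℚ) := by exact_mod_cast hΔ
  set α : ℚ := 9 / (100 * (k:ℚ) * (n:ℚ)) with hαdef
  set β : ℚ := 3 / (7 * ((k:ℚ)+1) * (n:ℚ) * (Δ:ℚ)) with hβdef
  have hαpos : 0 < α := by positivity
  have hβpos : 0 < β := by positivity
  have hαlt1 : α < 1 := by
    rw [hαdef, div_lt_one (by positivity)]
    nlinarith
  have hβlt1 : β < 1 := by
    have h6 : (6:ℚ) ≤ ((k:ℚ)+1) * (n:ℚ) := by nlinarith
    have hx6 : (6:ℚ) ≤ ((k:ℚ)+1) * (n:ℚ) * (Δ:ℚ) :=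
      le_trans h6 (le_mul_of_one_le_right (by positivity) hΔq)
    rw [hβdef, div_lt_one (by positivity)]
    nlinarith [hx6]
  set x : Idx V → ℚ := Sum.elim (fun _ => α) (fun _ => β) with hxdef
  have hΩcard : (Fintype.card (V → Fin N) : ℚ) = (N:ℚ) ^ (Fintype.card V) := by
    rw [Fintype.card_fun, Fintype.card_fin]
    push_cast
    rfl
  have hΩpos : (0:ℚ) < (Fintype.card (V → Fin N) : ℚ) := by
    rw [hΩcard]
    have : (0:ℚ) < (N:ℚ) := by exact_mod_cast hNpos
    positivity
  have hNn : (N:ℚ) ^ (n - 1) * (N:ℚ) = (N:ℚ) ^ n := by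
    rw [← pow_succ]
    congr 1
    omega
  -- the local lemma
  have hconc : (Ev (EvA k N f) (IdxSet E)).Nonempty := by
    apply LLL_conclusion (EvA k N f) (IdxSet E) (Gam E) x
    · intro i _
      exact Finset.filter_subset _ _
    · intro i _
      rcases i with p | q <;> simp [hxdef] <;> positivity
    · intro i _
      rcases i with p | q <;> simp only [hxdef, Sum.elim_inl, Sum.elim_inr]
      · exact hαlt1
      · exact hβlt1
    · -- the main hypothesis
      intro i hi S hS hdisj
      have hdisjT : ∀ j ∈ S, Disjoint (vbl i) (vbl j) := by
        intro j hj
        by_contra hc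
        exact hdisj j hj (Finset.mem_filter.mpr ⟨hS hj, hc⟩)
      have hDetEv : Det (S.biUnion vbl) (Ev (EvA k N f) S) := by
        intro ω ω' hagree
        rw [mem_Ev, mem_Ev]
        apply forall_congr'
        intro j
        apply imp_congr_right
        intro hj
        exact not_congr (det_EvA k N f j ω ω'
          (fun v hv => hagree v (Finset.mem_biUnion.mpr ⟨j, hj, hv⟩)))
      have hdisjU : Disjoint (vbl i) (S.biUnion vbl) :=
        Finset.disjoint_biUnion_right _ _ _ |>.mpr hdisjT
      have hprodid := card_inter_mul_card hdisjU (det_EvA k N f i) hDetEv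
      -- the two cardinalities g1 g2
      set G : Finset (Idx V) := (Gam E i).erase i with hGdef
      set g1 : ℕ := (G.filter (fun j => j.isLeft = true)).card with hg1def
      set g2 : ℕ := (G.filter (fun j => ¬ (j.isLeft = true))).card with hg2def
      have hprodG : (∏ j ∈ G, (1 - x j)) = (1 - α) ^ g1 * (1 - β) ^ g2 := by
        rw [hxdef]
        exact prod_split G α β
      have hg1G : g1 ≤ ((Gam E i).filter (fun j => j.isLeft = true)).card :=
        Finset.card_le_card (Finset.filter_subset_filter _ (Finset.erase_subset _ _))
      have hg2G : g2 ≤ ((Gam E i).filter (fun j => ¬ (j.isLeft = true))).card :=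
        Finset.card_le_card (Finset.filter_subset_filter _ (Finset.erase_subset _ _))
      -- key bound on the event cardinality, case split
      have hA_le : ((EvA k N f i).card : ℚ) ≤
          (x i * ∏ j ∈ G, (1 - x j)) * (Fintype.card (V → Fin N) : ℚ) := by
        rcases (mem_IdxSet E).mp hi with ⟨p, hp2, rfl⟩ | ⟨e, w, he, rfl⟩
        · -- collision event
          obtain ⟨u, v, huv, hpuv⟩ := Finset.card_eq_two.mp hp2
          have hA_eq : EvA k N f (Sum.inl p) =
              Finset.univ.filter (fun ω : V → Fin N => ω u = ω v) := by
            subst hpuv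
            ext ω
            simp only [EvA, Sum.elim_inl, Finset.mem_filter, Finset.mem_univ, true_and,
              Finset.mem_insert, Finset.mem_singleton]
            constructor
            · rintro ⟨a, (rfl | rfl), b, (rfl | rfl), hab, hcol⟩
              · exact absurd rfl hab
              · exact hcol
              · exact hcol.symm
              · exact absurd rfl hab
            · intro h
              exact ⟨u, Or.inl rfl, v, Or.inr rfl, huv, h⟩
          have hA_nat : (EvA k N f (Sum.inl p)).card ≤ N ^ (Fintype.card V - 1) := by
            rw [hA_eq]
            exact card_collision u v huv
          have hvblcard : (vbl (Sum.inl p)).card = 2 := hp2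
          have hg1' : g1 ≤ 2 * n := by
            have h2 := card_Gam_left E (Sum.inl p)
            rw [hvblcard, ← hn] at h2
            omega
          have hg2' : g2 ≤ 2 * (n * Δ + E.card) := by
            have h2 := card_Gam_right E Δ hdeg' (Sum.inl p)
            rw [hvblcard, ← hn] at h2
            have hcm : Δ * n = n * Δ := Nat.mul_comm _ _
            have := le_trans hg2G h2
            linarith [this]
          have hnum := numeric1 k n Δ g1 g2 E.card hk hn2 hΔ hg1' hg2' hEcard
          rw [← hN] at hnum
          have hxi : x (Sum.inl p) = α := by rw [hxdef]; rfl
          rw [hxi, hprodG]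
          calc ((EvA k N f (Sum.inl p)).card : ℚ) ≤ (N:ℚ) ^ (Fintype.card V - 1) := by
                exact_mod_cast hA_nat
            _ = (N:ℚ) ^ (n - 1) := by rw [hn]
            _ ≤ (N:ℚ) ^ (n - 1) *
                ((N:ℚ) * (9 / (100 * (k:ℚ) * (n:ℚ))) * ((1 - α) ^ g1 * (1 - β) ^ g2)) := by
                nth_rewrite 1 [← mul_one ((N:ℚ) ^ (n - 1))]
                apply mul_le_mul_of_nonneg_left _ (by positivity)
                calc (1:ℚ) ≤ (N:ℚ) * (9 / (100 * (k:ℚ) * (n:ℚ))) *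
                    ((1 - 9 / (100 * (k:ℚ) * (n:ℚ))) ^ g1
                      * (1 - 3 / (7 * ((k:ℚ)+1) * (n:ℚ) * (Δ:ℚ))) ^ g2) := hnum
                  _ = (N:ℚ) * (9 / (100 * (k:ℚ) * (n:ℚ))) * ((1 - α) ^ g1 * (1 - β) ^ g2) := by
                      rw [hαdef, hβdef]
            _ = (α * ((1 - α) ^ g1 * (1 - β) ^ g2)) * ((N:ℚ) ^ (n-1) * (N:ℚ)) := by
                rw [hαdef]; ring
            _ = (α * ((1 - α) ^ g1 * (1 - β) ^ g2)) * (Fintype.card (V → Fin N) : ℚ) := by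
                rw [hNn, hΩcard, hn]
        · -- hyperedge event
          have hA_nat : (EvA k N f (Sum.inr (e, w))).card ≤ k * N ^ (Fintype.card V - 1) := by
            have : EvA k N f (Sum.inr (e, w)) = Finset.univ.filter
                (fun ω : V → Fin N => (e.image ω).card = k ∧ ω w ∈ f (e.image ω)) := rfl
            rw [this]
            exact card_B e w f hf
          have hvblcard : (vbl (Sum.inr (e, w))).card ≤ k + 1 := by
            calc (insert w e).card ≤ e.card + 1 := Finset.card_insert_le _ _
              _ = k + 1 := by rw [hunif e he]
          have hg1' : g1 ≤ (k+1) * n := by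
            have h2 := card_Gam_left E (Sum.inr (e, w))
            have h3 : (vbl (Sum.inr (e, w))).card * Fintype.card V ≤ (k+1) * n := by
              rw [← hn] at *
              exact Nat.mul_le_mul_right _ hvblcard
            omega
          have hg2' : g2 ≤ (k+1) * (n * Δ + E.card) := by
            have h2 := card_Gam_right E Δ hdeg' (Sum.inr (e, w))
            have h3 : (vbl (Sum.inr (e, w))).card * (Δ * Fintype.card V + E.card)
                ≤ (k+1) * (n * Δ + E.card) := by
              rw [← hn, Nat.mul_comm Δ n]
              exact Nat.mul_le_mul_right _ hvblcard
            omega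
          have hnum := numeric2 k n Δ g1 g2 E.card hk hkn hΔ hg1' hg2' hEcard
          rw [← hN] at hnum
          have hxi : x (Sum.inr (e, w)) = β := by rw [hxdef]; rfl
          rw [hxi, hprodG]
          calc ((EvA k N f (Sum.inr (e, w))).card : ℚ)
              ≤ (k:ℚ) * (N:ℚ) ^ (Fintype.card V - 1) := by exact_mod_cast hA_nat
            _ = (k:ℚ) * (N:ℚ) ^ (n - 1) := by rw [hn]
            _ ≤ ((N:ℚ) * (3 / (7 * ((k:ℚ)+1) * (n:ℚ) * (Δ:ℚ))) *
                  ((1 - α) ^ g1 * (1 - β) ^ g2)) * (N:ℚ) ^ (n - 1) := by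
                apply mul_le_mul_of_nonneg_right _ (by positivity)
                calc (k:ℚ) ≤ (N:ℚ) * (3 / (7 * ((k:ℚ)+1) * (n:ℚ) * (Δ:ℚ))) *
                    ((1 - 9 / (100 * (k:ℚ) * (n:ℚ))) ^ g1
                      * (1 - 3 / (7 * ((k:ℚ)+1) * (n:ℚ) * (Δ:ℚ))) ^ g2) := hnum
                  _ = (N:ℚ) * (3 / (7 * ((k:ℚ)+1) * (n:ℚ) * (Δ:ℚ))) *
                      ((1 - α) ^ g1 * (1 - β) ^ g2) := by rw [hαdef, hβdef]
            _ = (β * ((1 - α) ^ g1 * (1 - β) ^ g2)) * ((N:ℚ) ^ (n-1) * (N:ℚ)) := by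
                rw [hβdef]; ring
            _ = (β * ((1 - α) ^ g1 * (1 - β) ^ g2)) * (Fintype.card (V → Fin N) : ℚ) := by
                rw [hNn, hΩcard, hn]
      -- put it together
      have hcast : ((EvA k N f i ∩ Ev (EvA k N f) S).card : ℚ) *
          (Fintype.card (V → Fin N) : ℚ)
          = ((EvA k N f i).card : ℚ) * ((Ev (EvA k N f) S).card : ℚ) := by
        exact_mod_cast congrArg (Nat.cast (R := ℚ)) hprodid
      have hEvnonneg : (0:ℚ) ≤ ((Ev (EvA k N f) S).card : ℚ) := by positivity
      have hchain : ((EvA k N f i ∩ Ev (EvA k N f) S).card : ℚ) *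
          (Fintype.card (V → Fin N) : ℚ)
          ≤ ((x i * ∏ j ∈ G, (1 - x j)) * ((Ev (EvA k N f) S).card : ℚ)) *
            (Fintype.card (V → Fin N) : ℚ) := by
        rw [hcast]
        calc ((EvA k N f i).card : ℚ) * ((Ev (EvA k N f) S).card : ℚ)
            ≤ ((x i * ∏ j ∈ G, (1 - x j)) * (Fintype.card (V → Fin N) : ℚ)) *
              ((Ev (EvA k N f) S).card : ℚ) :=
              mul_le_mul_of_nonneg_right hA_le hEvnonneg
          _ = ((x i * ∏ j ∈ G, (1 - x j)) * ((Ev (EvA k N f) S).card : ℚ)) *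
              (Fintype.card (V → Fin N) : ℚ) := by ring
      exact le_of_mul_le_mul_right hchain hΩpos
    · -- nonempty sample space
      have : Nonempty (V → Fin N) := ⟨fun _ => ⟨0, hNpos⟩⟩
      exact Fintype.card_pos_iff.mpr this
  obtain ⟨ω, hω⟩ := hconc
  rw [mem_Ev] at hω
  have hinj : Function.Injective ω := by
    intro u v huv
    by_contra hne
    have hpin : (Sum.inl ({u, v} : Finset V) : Idx V) ∈ IdxSet E :=
      (mem_IdxSet E).mpr (Or.inl ⟨{u, v}, Finset.card_pair hne, rfl⟩)
    apply hω _ hpin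
    simp only [EvA, Sum.elim_inl, Finset.mem_filter, Finset.mem_univ, true_and]
    exact ⟨u, Finset.mem_insert_self _ _, v,
      Finset.mem_insert_of_mem (Finset.mem_singleton_self _), hne, huv⟩
  refine ⟨ω, hinj, ?_⟩
  intro e he
  rw [Finset.disjoint_right]
  intro a ha
  obtain ⟨w, -, rfl⟩ := Finset.mem_image.mp ha
  have hqin : (Sum.inr (e, w) : Idx V) ∈ IdxSet E :=
    (mem_IdxSet E).mpr (Or.inr ⟨e, w, he, rfl⟩)
  have hnot := hω _ hqin
  simp only [EvA, Sum.elim_inr, Finset.mem_filter, Finset.mem_univ, true_and, not_and] at hnot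
  have hcard : (e.image ω).card = k := by
    rw [Finset.card_image_of_injective _ hinj, hunif e he]
  exact hnot hcard
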